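/- Given two linear expressions e and f, if ⟦e⟧ ⊆ ⟦f⟧ then e ≤ f is derivable, i.e. e ∪ f ≡ f. -/

import Mathlib

namespace CKAnote

/-- Commutative regular expressions over an alphabet `α`. -/
inductive CRE (α : Type) where
  | zero : CRE α
  | one : CRE α
  | letter : α → CRE α
  | mul : CRE α → CRE α → CRE α
  | union : CRE α → CRE α → CRE α
  | star : CRE α → CRE α

variable {α : Type} [Fintype α] [DecidableEq α]

/-- Semantics of a commutative regular expression as a set of Parikh vectors. -/
def sem : CRE α → Set (α → ℕ)
  | .zero => ∅
  | .one => {0}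
  | .letter a => {Pi.single a 1}
  | .mul e f => {w | ∃ u ∈ sem e, ∃ v ∈ sem f, w = u + v}
  | .union e f => sem e ∪ sem f
  | .star e => ↑(AddSubmonoid.closure (sem e))

/-- Provable equality: the smallest congruence containing the axioms of
commutative Kleene algebra (where `e ≤ f` abbreviates `e ∪ f ≡ f`). -/
inductive CKA : CRE α → CRE α → Prop
  | refl (e : CRE α) : CKA e e
  | symm {e f : CRE α} : CKA e f → CKA f e
  | trans {e f g : CRE α} : CKA e f → CKA f g → CKA e g
  | mul_congr {e e' f f' : CRE α} : CKA e e' → CKA f f' → CKA (e.mul f) (e'.mul f')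
  | union_congr {e e' f f' : CRE α} : CKA e e' → CKA f f' → CKA (e.union f) (e'.union f')
  | star_congr {e e' : CRE α} : CKA e e' → CKA e.star e'.star
  | mul_assoc (e f g : CRE α) : CKA (e.mul (f.mul g)) ((e.mul f).mul g)
  | mul_comm (e f : CRE α) : CKA (e.mul f) (f.mul e)
  | one_mul (e : CRE α) : CKA (CRE.one.mul e) e
  | union_assoc (e f g : CRE α) : CKA (e.union (f.union g)) ((e.union f).union g)
  | union_comm (e f : CRE α) : CKA (e.union f) (f.union e)
  | union_idem (e : CRE α) : CKA (e.union e) e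
  | zero_union (e : CRE α) : CKA (CRE.zero.union e) e
  | zero_mul (e : CRE α) : CKA (CRE.zero.mul e) CRE.zero
  | left_distrib (e f g : CRE α) : CKA (e.mul (f.union g)) ((e.mul f).union (e.mul g))
  | star_unfold (e : CRE α) : CKA ((CRE.one.union (e.mul e.star)).union e.star) e.star
  | star_lfp {e f : CRE α} : CKA ((e.mul f).union f) f → CKA ((e.star.mul f).union f) f

/-- `e ≤ f`, i.e. `e ∪ f ≡ f`. -/
def leq (e f : CRE α) : Prop := CKA (e.union f) f

/-- `e^n`, the `n`-fold product of `e` with itself. -/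
def pow (e : CRE α) : ℕ → CRE α
  | 0 => CRE.one
  | n + 1 => e.mul (pow e n)

/-- `e^{<n}`, i.e. `(e ∪ 1)^(n-1)` for `n > 0` and `0` for `n = 0`. -/
def ltPow (e : CRE α) : ℕ → CRE α
  | 0 => CRE.zero
  | n + 1 => pow (e.union CRE.one) n

/-- Finite union of a list of expressions. -/
def unionList : List (CRE α) → CRE α
  | [] => CRE.zero
  | e :: l => e.union (unionList l)

/-- Finite product of a list of expressions. -/
def prodList : List (CRE α) → CRE α
  | [] => CRE.one
  | e :: l => e.mul (prodList l)

/-- `expr(u)`: the product over `a ∈ α` of `u a` copies of the letter `a`. -/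
noncomputable def exprVec (u : α → ℕ) : CRE α :=
  prodList ((Finset.univ : Finset α).toList.map (fun a => pow (CRE.letter a) (u a)))

/-- The union `⋃_{b ∈ B} expr(b)` for a finite set of Parikh vectors `B`. -/
noncomputable def unionVecs (B : Finset (α → ℕ)) : CRE α :=
  unionList (B.toList.map exprVec)

/-- The linear expression `expr(u) · (⋃_{b ∈ B} expr(b))*`. -/
noncomputable def linExpr (u : α → ℕ) (B : Finset (α → ℕ)) : CRE α :=
  (exprVec u).mul (unionVecs B).star

/-- A finite set of Parikh vectors is independent when every Parikh vector
admits at most one representation as an `ℕ`-linear combination of its elements. -/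
def Independent (B : Finset (α → ℕ)) : Prop :=
  ∀ c d : (α → ℕ) → ℕ, (∑ b ∈ B, c b • b) = (∑ b ∈ B, d b • b) → ∀ b ∈ B, c b = d b

/-- The semilinear expression associated to a list of linear data:
the finite union of the corresponding linear expressions. -/
noncomputable def semiLin (L : List ((α → ℕ) × Finset (α → ℕ))) : CRE α :=
  unionList (L.map (fun p => linExpr p.1 p.2))

/-- The dimension of a semilinear expression: the maximum of the dimensions
of its linear components. -/
def dimSL (L : List ((α → ℕ) × Finset (α → ℕ))) : ℕ :=
  (L.map (fun p => p.2.card)).foldr max 0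

/-- Finitary (star-free) expressions. -/
def NoStar : CRE α → Prop
  | .zero => True
  | .one => True
  | .letter _ => True
  | .mul e f => NoStar e ∧ NoStar f
  | .union e f => NoStar e ∧ NoStar f
  | .star _ => False

/-- Coordinatewise embedding of `ℕ^α` into `ℚ^α`. -/
def toQ (v : α → ℕ) : α → ℚ := fun a => (v a : ℚ)

local infix:50 " ≡' " => CKA
local infix:50 " ≤' " => leq

section Aux

/-! ### Basic `leq`/`CKA` infrastructure -/

theorem cka_leq_of_cka {e f : CRE α} (h : CKA e f) : leq e f :=
  (CKA.union_congr h (CKA.refl f)).trans (CKA.union_idem f)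

theorem leq_refl (e : CRE α) : leq e e := CKA.union_idem e

theorem leq_trans {e f g : CRE α} (h1 : leq e f) (h2 : leq f g) : leq e g :=
  (((CKA.union_congr (CKA.refl e) h2.symm).trans (CKA.union_assoc e f g)).trans
    (CKA.union_congr h1 (CKA.refl g))).trans h2

theorem cka_leq {e f g : CRE α} (h : CKA e f) (h2 : leq f g) : leq e g :=
  leq_trans (cka_leq_of_cka h) h2

theorem leq_cka {e f g : CRE α} (h : leq e f) (h2 : CKA f g) : leq e g :=
  leq_trans h (cka_leq_of_cka h2)

instance : Trans (@CKA α) (@CKA α) (@CKA α) := ⟨CKA.trans⟩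
instance : Trans (@leq α) (@leq α) (@leq α) := ⟨leq_trans⟩
instance : Trans (@CKA α) (@leq α) (@leq α) := ⟨cka_leq⟩
instance : Trans (@leq α) (@CKA α) (@leq α) := ⟨leq_cka⟩

theorem le_union_left (e f : CRE α) : leq e (e.union f) :=
  (CKA.union_assoc e e f).trans (CKA.union_congr (CKA.union_idem e) (CKA.refl f))

theorem le_union_right (e f : CRE α) : leq f (e.union f) :=
  leq_cka (le_union_left f e) (CKA.union_comm f e)

theorem union_le {e f g : CRE α} (h1 : leq e g) (h2 : leq f g) : leq (e.union f) g :=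
  ((CKA.union_assoc e f g).symm.trans (CKA.union_congr (CKA.refl e) h2)).trans h1

theorem zero_le (e : CRE α) : leq CRE.zero e := CKA.zero_union e

theorem mul_le_mul_right {f f' : CRE α} (e : CRE α) (h : leq f f') :
    leq (e.mul f) (e.mul f') :=
  (CKA.left_distrib e f f').symm.trans (CKA.mul_congr (CKA.refl e) h)

theorem mul_le_mul_left {e e' : CRE α} (h : leq e e') (f : CRE α) :
    leq (e.mul f) (e'.mul f) :=
  cka_leq (CKA.mul_comm e f) (leq_cka (mul_le_mul_right f h) (CKA.mul_comm f e'))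

theorem mul_le_mul {e e' f f' : CRE α} (h1 : leq e e') (h2 : leq f f') :
    leq (e.mul f) (e'.mul f') :=
  leq_trans (mul_le_mul_left h1 f) (mul_le_mul_right e' h2)

theorem cka_mul_one (e : CRE α) : CKA (e.mul CRE.one) e :=
  (CKA.mul_comm e .one).trans (CKA.one_mul e)

theorem cka_mul_assoc' (e f g : CRE α) : CKA ((e.mul f).mul g) (e.mul (f.mul g)) :=
  (CKA.mul_assoc e f g).symm

theorem cka_mul_left_comm (e f g : CRE α) : CKA (e.mul (f.mul g)) (f.mul (e.mul g)) :=
  (CKA.mul_assoc e f g).trans ((CKA.mul_congr (CKA.mul_comm e f) (CKA.refl g)).trans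
    (CKA.mul_assoc f e g).symm)

theorem cka_right_distrib (e f g : CRE α) :
    CKA ((e.union f).mul g) ((e.mul g).union (f.mul g)) :=
  (CKA.mul_comm _ g).trans ((CKA.left_distrib g e f).trans
    (CKA.union_congr (CKA.mul_comm g e) (CKA.mul_comm g f)))

/-! ### Star lemmas -/

theorem unfold_le (e : CRE α) : leq (CRE.one.union (e.mul e.star)) e.star := CKA.star_unfold e

theorem one_le_star (e : CRE α) : leq CRE.one e.star :=
  leq_trans (le_union_left _ _) (unfold_le e)

theorem mul_star_le (e : CRE α) : leq (e.mul e.star) e.star :=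
  leq_trans (le_union_right _ _) (unfold_le e)

theorem star_mul_star_le (e : CRE α) : leq (e.star.mul e.star) e.star :=
  CKA.star_lfp (mul_star_le e)

theorem le_star (e : CRE α) : leq e e.star :=
  cka_leq (cka_mul_one e).symm (leq_trans (mul_le_mul_right e (one_le_star e)) (mul_star_le e))

/-! ### pow / prodList / unionList lemmas -/

theorem cka_pow_add (e : CRE α) (m n : ℕ) :
    CKA (pow e (m + n)) ((pow e m).mul (pow e n)) := by
  induction m with
  | zero => rw [Nat.zero_add]; exact (CKA.one_mul _).symm
  | succ m ih =>
    rw [show m + 1 + n = (m + n) + 1 by omega]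
    exact (CKA.mul_congr (CKA.refl e) ih).trans (CKA.mul_assoc e (pow e m) (pow e n))

theorem cka_prodList_congr {β : Type*} (l : List β) (f g : β → CRE α)
    (h : ∀ a ∈ l, CKA (f a) (g a)) :
    CKA (prodList (l.map f)) (prodList (l.map g)) := by
  induction l with
  | nil => exact CKA.refl _
  | cons a l ih =>
    exact CKA.mul_congr (h a (List.mem_cons_self))
      (ih fun b hb => h b (List.mem_cons_of_mem _ hb))

theorem cka_prodList_map_mul {β : Type*} (l : List β) (f g : β → CRE α) :
    CKA (prodList (l.map fun a => (f a).mul (g a)))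
      ((prodList (l.map f)).mul (prodList (l.map g))) := by
  induction l with
  | nil => exact (CKA.one_mul _).symm
  | cons a l ih =>
    refine (CKA.mul_congr (CKA.refl _) ih).trans ?_
    exact (cka_mul_assoc' _ _ _).trans
      ((CKA.mul_congr (CKA.refl (f a)) (cka_mul_left_comm _ _ _)).trans (CKA.mul_assoc _ _ _))

theorem cka_prodList_one {β : Type*} (l : List β) :
    CKA (prodList (l.map fun _ => (CRE.one : CRE α))) CRE.one := by
  induction l with
  | nil => exact CKA.refl _
  | cons a l ih => exact (CKA.one_mul _).trans ih

theorem cka_exprVec_add (u v : α → ℕ) :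
    CKA (exprVec (u + v)) ((exprVec u).mul (exprVec v)) := by
  unfold exprVec
  refine CKA.trans ?_ (cka_prodList_map_mul _ _ _)
  refine cka_prodList_congr _ _ _ fun a _ => ?_
  rw [Pi.add_apply]
  exact cka_pow_add _ _ _

theorem cka_exprVec_zero : CKA (exprVec (0 : α → ℕ)) CRE.one := by
  unfold exprVec
  refine CKA.trans (cka_prodList_congr _ _ (fun _ => CRE.one) fun a _ => ?_) (cka_prodList_one _)
  rw [Pi.zero_apply]
  exact CKA.refl _

theorem mem_le_unionList {e : CRE α} {l : List (CRE α)} (h : e ∈ l) : leq e (unionList l) := by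
  induction l with
  | nil => cases h
  | cons a l ih =>
    rcases List.mem_cons.1 h with h | h
    · subst h; exact le_union_left _ _
    · exact leq_trans (ih h) (le_union_right _ _)

theorem unionList_le {l : List (CRE α)} {f : CRE α} (h : ∀ e ∈ l, leq e f) :
    leq (unionList l) f := by
  induction l with
  | nil => exact zero_le f
  | cons a l ih =>
    exact union_le (h a (List.mem_cons_self)) (ih fun e he => h e (List.mem_cons_of_mem _ he))

theorem cka_mul_unionList (x : CRE α) (l : List (CRE α)) :
    CKA (x.mul (unionList l)) (unionList (l.map fun e => x.mul e)) := by
  induction l with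
  | nil => exact (CKA.mul_comm x .zero).trans (CKA.zero_mul x)
  | cons a l ih => exact (CKA.left_distrib x a _).trans (CKA.union_congr (CKA.refl _) ih)

theorem exprVec_le_unionVecs {b : α → ℕ} {B : Finset (α → ℕ)} (h : b ∈ B) :
    leq (exprVec b) (unionVecs B) :=
  mem_le_unionList (List.mem_map_of_mem (Finset.mem_toList.2 h))

theorem exprVec_closure_le {B : Finset (α → ℕ)} {w : α → ℕ}
    (h : w ∈ AddSubmonoid.closure (↑B : Set (α → ℕ))) :
    leq (exprVec w) (unionVecs B).star := by
  induction h using AddSubmonoid.closure_induction with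
  | mem b hb => exact leq_trans (exprVec_le_unionVecs hb) (le_star _)
  | zero => exact cka_leq cka_exprVec_zero (one_le_star _)
  | add x y hx hy ihx ihy =>
    exact cka_leq (cka_exprVec_add x y) (leq_trans (mul_le_mul ihx ihy) (star_mul_star_le _))

/-! ### Semantics computations -/

theorem sem_pow_letter (a : α) (n : ℕ) :
    sem (pow (CRE.letter a) n) = {n • Pi.single a 1} := by
  induction n with
  | zero => simp [pow, sem]
  | succ n ih =>
    ext w
    simp only [pow, sem, ih, Set.mem_setOf_eq, Set.mem_singleton_iff]
    constructor
    · rintro ⟨x, rfl, y, rfl, rfl⟩; rw [succ_nsmul']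
    · rintro rfl; exact ⟨_, rfl, _, rfl, succ_nsmul' _ _⟩

theorem sem_prodList_pow (u : α → ℕ) (l : List α) :
    sem (prodList (l.map fun a => pow (CRE.letter a) (u a)))
      = {(l.map fun a => u a • (Pi.single a 1 : α → ℕ)).sum} := by
  induction l with
  | nil => simp [prodList, sem]
  | cons a l ih =>
    ext w
    simp only [List.map_cons, prodList, sem, sem_pow_letter, ih, Set.mem_setOf_eq,
      Set.mem_singleton_iff, List.sum_cons]
    constructor
    · rintro ⟨x, rfl, y, rfl, rfl⟩; rfl
    · rintro rfl; exact ⟨_, rfl, _, rfl, rfl⟩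

theorem sem_exprVec (u : α → ℕ) : sem (exprVec u) = {u} := by
  rw [exprVec, sem_prodList_pow]
  congr 1
  rw [Finset.sum_map_toList]
  have h1 : ∀ a : α, u a • (Pi.single a 1 : α → ℕ) = Pi.single a (u a) := by
    intro a; ext b; by_cases hb : b = a <;> simp [hb, Pi.single_apply]
  simp_rw [h1]
  exact Finset.univ_sum_single u

theorem sem_unionVecs (B : Finset (α → ℕ)) : sem (unionVecs B) = ↑B := by
  rw [unionVecs]
  have h1 : ∀ l : List (α → ℕ), sem (unionList (l.map exprVec)) = {x | x ∈ l} := by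
    intro l
    induction l with
    | nil => simp [unionList, sem]
    | cons a l ih => ext w; simp [unionList, sem, sem_exprVec, ih]
  rw [h1]
  ext w
  simp [Finset.mem_toList]

theorem sem_linExpr (u : α → ℕ) (A : Finset (α → ℕ)) :
    sem (linExpr u A)
      = {x | ∃ s ∈ AddSubmonoid.closure (↑A : Set (α → ℕ)), x = u + s} := by
  ext w
  simp only [linExpr, sem, sem_exprVec, sem_unionVecs, Set.mem_setOf_eq,
    Set.mem_singleton_iff, SetLike.mem_coe]
  constructor
  · rintro ⟨x, rfl, y, hy, rfl⟩; exact ⟨y, hy, rfl⟩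
  · rintro ⟨s, hs, rfl⟩; exact ⟨u, rfl, s, hs, rfl⟩

/-! ### Closure membership as finite combinations -/

theorem mem_closure_finset {B : Finset (α → ℕ)} {w : α → ℕ}
    (h : w ∈ AddSubmonoid.closure (↑B : Set (α → ℕ))) :
    ∃ c : (α → ℕ) → ℕ, w = ∑ b ∈ B, c b • b := by
  induction h using AddSubmonoid.closure_induction with
  | mem b hb =>
    refine ⟨fun x => if x = b then 1 else 0, ?_⟩
    rw [Finset.sum_eq_single b]
    · simp
    · intro x _ hx; simp [hx]
    · intro hb'; exact absurd hb hb'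
  | zero => exact ⟨0, by simp⟩
  | add x y hx hy ihx ihy =>
    obtain ⟨cx, rfl⟩ := ihx
    obtain ⟨cy, rfl⟩ := ihy
    exact ⟨cx + cy, by rw [← Finset.sum_add_distrib]; simp [add_smul]⟩

/-! ### Dickson's lemma application -/

theorem exists_smul_mem_closure {B : Finset (α → ℕ)} (u v a : α → ℕ)
    (h : ∀ n : ℕ, ∃ c ∈ AddSubmonoid.closure (↑B : Set (α → ℕ)), u + n • a = v + c) :
    ∃ k : ℕ, 0 < k ∧ k • a ∈ AddSubmonoid.closure (↑B : Set (α → ℕ)) := by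
  choose d hd hd2 using h
  choose lam hlam using fun n => mem_closure_finset (hd n)
  have hpwo : Set.IsPWO (Set.univ : Set (↥(↑B : Set (α → ℕ)) → ℕ)) :=
    Set.isPWO_of_wellQuasiOrderedLE _
  obtain ⟨m, n, hmn, hle⟩ :=
    hpwo.exists_lt (f := fun n (b : ↥(↑B : Set (α → ℕ))) => lam n b) (fun _ => trivial)
  refine ⟨n - m, by omega, ?_⟩
  have key : v + (d m + (n - m) • a) = v + d n := by
    rw [← add_assoc, ← hd2 m, add_assoc, ← add_nsmul, show m + (n - m) = n by omega, hd2 n]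
  have key2 : d m + (n - m) • a = d n := add_left_cancel key
  have hsum : d n = d m + ∑ b ∈ B, (lam n b - lam m b) • b := by
    rw [hlam n, hlam m, ← Finset.sum_add_distrib]
    refine Finset.sum_congr rfl fun b hb => ?_
    rw [← add_smul]
    congr 1
    have h2 : lam m b ≤ lam n b := hle ⟨b, hb⟩
    omega
  have key3 : (n - m) • a = ∑ b ∈ B, (lam n b - lam m b) • b := by
    apply add_left_cancel (a := d m)
    rw [key2, hsum]
  rw [key3]
  exact sum_mem fun b hb =>
    AddSubmonoid.nsmul_mem _ (AddSubmonoid.subset_closure hb) _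

/-! ### The key derivations -/

/-- Product of stars of the expressions of a list of vectors. -/
noncomputable def starProd (l : List (α → ℕ)) : CRE α :=
  prodList (l.map fun a => (exprVec a).star)

theorem cka_shuffle (p q r s : CRE α) :
    CKA (p.mul ((q.mul r).mul s)) (q.mul (p.mul (r.mul s))) :=
  (CKA.mul_congr (CKA.refl p) (cka_mul_assoc' q r s)).trans (cka_mul_left_comm p q (r.mul s))

theorem peel {B : Finset (α → ℕ)} {F : CRE α} (w a : α → ℕ) (X : CRE α) (k : ℕ) (hk : 0 < k)
    (hka : k • a ∈ AddSubmonoid.closure (↑B : Set (α → ℕ)))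
    (H : ∀ i : ℕ, leq ((exprVec (w + i • a)).mul (X.mul (unionVecs B).star)) F) :
    leq ((exprVec w).mul (((exprVec a).star.mul X).mul (unionVecs B).star)) F := by
  let Bs : CRE α := (unionVecs B).star
  let T : ℕ → CRE α := fun i => (exprVec (w + i • a)).mul (X.mul Bs)
  let g : CRE α := unionList ((List.range k).map T)
  have hT0 : T 0 = (exprVec w).mul (X.mul Bs) := by
    show (exprVec (w + 0 • a)).mul (X.mul Bs) = _
    rw [zero_nsmul, add_zero]
  have hgF : leq g F := by
    refine unionList_le fun e he => ?_
    obtain ⟨j, _, rfl⟩ := List.mem_map.1 he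
    exact H j
  have hTg : ∀ j < k, leq (T j) g := fun j hj =>
    mem_le_unionList (List.mem_map_of_mem (f := T) (List.mem_range.2 hj))
  have hshift : ∀ j : ℕ, CKA ((exprVec a).mul (T j)) (T (j + 1)) := by
    intro j
    have heq : w + j • a + a = w + (j + 1) • a := by rw [succ_nsmul, ← add_assoc]
    calc (exprVec a).mul (T j)
        ≡' ((exprVec a).mul (exprVec (w + j • a))).mul (X.mul Bs) := CKA.mul_assoc _ _ _
      _ ≡' ((exprVec (w + j • a)).mul (exprVec a)).mul (X.mul Bs) :=
          CKA.mul_congr (CKA.mul_comm _ _) (CKA.refl _)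
      _ ≡' (exprVec (w + j • a + a)).mul (X.mul Bs) :=
          CKA.mul_congr (cka_exprVec_add _ _).symm (CKA.refl _)
      _ ≡' T (j + 1) := by rw [heq]; exact CKA.refl _
  have hwrap : leq (T k) (T 0) := by
    rw [hT0]
    calc (exprVec (w + k • a)).mul (X.mul Bs)
        ≡' ((exprVec w).mul (exprVec (k • a))).mul (X.mul Bs) :=
          CKA.mul_congr (cka_exprVec_add w (k • a)) (CKA.refl _)
      _ ≡' (exprVec w).mul (X.mul ((exprVec (k • a)).mul Bs)) := by
          refine (cka_mul_assoc' _ _ _).trans ?_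
          exact CKA.mul_congr (CKA.refl _) (cka_mul_left_comm _ _ _)
      _ ≤' (exprVec w).mul (X.mul (Bs.mul Bs)) :=
          mul_le_mul_right _ (mul_le_mul_right _ (mul_le_mul_left (exprVec_closure_le hka) Bs))
      _ ≤' (exprVec w).mul (X.mul Bs) :=
          mul_le_mul_right _ (mul_le_mul_right _ (star_mul_star_le _))
  have hstep : leq ((exprVec a).mul g) g := by
    refine cka_leq (cka_mul_unionList _ _) ?_
    rw [List.map_map]
    refine unionList_le fun e he => ?_
    obtain ⟨j, hj, rfl⟩ := List.mem_map.1 he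
    rw [List.mem_range] at hj
    refine cka_leq (hshift j) ?_
    rcases Nat.lt_or_ge (j + 1) k with hlt | hge
    · exact hTg _ hlt
    · have hjk : j + 1 = k := by omega
      rw [hjk]
      exact leq_trans hwrap (hTg 0 hk)
  have hlfp : leq ((exprVec a).star.mul g) g := CKA.star_lfp hstep
  calc (exprVec w).mul (((exprVec a).star.mul X).mul Bs)
      ≤' (exprVec a).star.mul (T 0) := by
        rw [hT0]; exact cka_leq_of_cka (cka_shuffle _ _ _ _)
    _ ≤' (exprVec a).star.mul g := mul_le_mul_right _ (hTg 0 hk)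
    _ ≤' g := hlfp
    _ ≤' F := hgF

theorem claimList {B : Finset (α → ℕ)} {F : CRE α} (l : List (α → ℕ))
    (hks : ∀ a ∈ l, ∃ k : ℕ, 0 < k ∧ k • a ∈ AddSubmonoid.closure (↑B : Set (α → ℕ))) :
    ∀ (w : α → ℕ) (X : CRE α),
      (∀ s ∈ AddSubmonoid.closure {x : α → ℕ | x ∈ l},
        leq ((exprVec (w + s)).mul (X.mul (unionVecs B).star)) F) →
      leq ((exprVec w).mul (((starProd l).mul X).mul (unionVecs B).star)) F := by
  induction l with
  | nil =>
    intro w X H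
    have h0 := H 0 (AddSubmonoid.zero_mem _)
    rw [add_zero] at h0
    refine cka_leq ?_ h0
    exact CKA.mul_congr (CKA.refl _) (CKA.mul_congr (CKA.one_mul X) (CKA.refl _))
  | cons a l ih =>
    intro w X H
    obtain ⟨k, hk, hka⟩ := hks a (List.mem_cons_self)
    have step : leq ((exprVec w).mul (((exprVec a).star.mul ((starProd l).mul X)).mul
        (unionVecs B).star)) F := by
      refine peel w a ((starProd l).mul X) k hk hka fun i => ?_
      refine ih (fun b hb => hks b (List.mem_cons_of_mem a hb)) (w + i • a) X fun s hs => ?_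
      rw [add_assoc]
      refine H (i • a + s) ?_
      refine AddSubmonoid.add_mem _ ?_ ?_
      · refine AddSubmonoid.nsmul_mem _ (AddSubmonoid.subset_closure ?_) i
        exact show a ∈ {x : α → ℕ | x ∈ a :: l} from List.mem_cons_self
      · refine AddSubmonoid.closure_mono (fun x hx => ?_) hs
        exact show x ∈ {y : α → ℕ | y ∈ a :: l} from List.mem_cons_of_mem a hx
    refine cka_leq ?_ step
    refine CKA.mul_congr (CKA.refl _) (CKA.mul_congr ?_ (CKA.refl _))
    exact cka_mul_assoc' (exprVec a).star (starProd l) X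

theorem one_le_starProd (l : List (α → ℕ)) : leq CRE.one (starProd l) := by
  induction l with
  | nil => exact leq_refl _
  | cons a l ih =>
    calc (CRE.one : CRE α) ≤' CRE.one.mul CRE.one := cka_leq_of_cka (CKA.one_mul _).symm
      _ ≤' (exprVec a).star.mul (starProd l) := mul_le_mul (one_le_star _) ih

theorem mul_starProd_le {a : α → ℕ} {l : List (α → ℕ)} (h : a ∈ l) :
    leq ((exprVec a).mul (starProd l)) (starProd l) := by
  induction l with
  | nil => cases h
  | cons b l ih =>
    rcases List.mem_cons.1 h with h | h
    · subst h
      calc (exprVec a).mul ((exprVec a).star.mul (starProd l))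
          ≡' ((exprVec a).mul (exprVec a).star).mul (starProd l) := CKA.mul_assoc _ _ _
        _ ≤' (exprVec a).star.mul (starProd l) := mul_le_mul_left (mul_star_le _) _
    · calc (exprVec a).mul ((exprVec b).star.mul (starProd l))
          ≡' (exprVec b).star.mul ((exprVec a).mul (starProd l)) := cka_mul_left_comm _ _ _
        _ ≤' (exprVec b).star.mul (starProd l) := mul_le_mul_right _ (ih h)

theorem unionVecs_star_le_starProd (A : Finset (α → ℕ)) :
    leq (unionVecs A).star (starProd A.toList) := by
  have h1 : leq ((unionVecs A).mul (starProd A.toList)) (starProd A.toList) := by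
    refine cka_leq (CKA.mul_comm _ _) (cka_leq (cka_mul_unionList _ _) ?_)
    refine unionList_le fun e he => ?_
    obtain ⟨e', he', rfl⟩ := List.mem_map.1 he
    obtain ⟨b, hb, rfl⟩ := List.mem_map.1 he'
    exact cka_leq (CKA.mul_comm _ _) (mul_starProd_le hb)
  have hlfp : leq ((unionVecs A).star.mul (starProd A.toList)) (starProd A.toList) :=
    CKA.star_lfp h1
  calc (unionVecs A).star
      ≡' (unionVecs A).star.mul CRE.one := (cka_mul_one _).symm
    _ ≤' (unionVecs A).star.mul (starProd A.toList) := mul_le_mul_right _ (one_le_starProd _)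
    _ ≤' starProd A.toList := hlfp

end Aux

/-- Inclusion of linear expressions: if `⟦e⟧ ⊆ ⟦f⟧` for linear `e`, `f`,
then `e ≤ f` is derivable. -/
theorem baseInclusion (u v : α → ℕ) (A B : Finset (α → ℕ))
    (h : sem (linExpr u A) ⊆ sem (linExpr v B)) :
    leq (linExpr u A) (linExpr v B) := by
  have hsub : ∀ s ∈ AddSubmonoid.closure (↑A : Set (α → ℕ)),
      ∃ c ∈ AddSubmonoid.closure (↑B : Set (α → ℕ)), u + s = v + c := by
    intro s hs
    have hm : u + s ∈ sem (linExpr u A) := by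
      rw [sem_linExpr]; exact ⟨s, hs, rfl⟩
    have hm2 := h hm
    rw [sem_linExpr] at hm2
    obtain ⟨c, hc, heq⟩ := hm2
    exact ⟨c, hc, heq⟩
  have hks : ∀ a ∈ A.toList,
      ∃ k : ℕ, 0 < k ∧ k • a ∈ AddSubmonoid.closure (↑B : Set (α → ℕ)) := by
    intro a ha
    rw [Finset.mem_toList] at ha
    refine exists_smul_mem_closure u v a fun n => ?_
    exact hsub (n • a) (AddSubmonoid.nsmul_mem _ (AddSubmonoid.subset_closure ha) n)
  have hset : {x : α → ℕ | x ∈ A.toList} = (↑A : Set (α → ℕ)) := by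
    ext x; simp [Finset.mem_toList]
  have hyp : ∀ s ∈ AddSubmonoid.closure {x : α → ℕ | x ∈ A.toList},
      leq ((exprVec (u + s)).mul (CRE.one.mul (unionVecs B).star)) (linExpr v B) := by
    intro s hs
    rw [hset] at hs
    obtain ⟨c, hc, heq⟩ := hsub s hs
    have hchain : leq ((exprVec (u + s)).mul (CRE.one.mul (unionVecs B).star))
        ((exprVec v).mul (unionVecs B).star) := by
      calc (exprVec (u + s)).mul (CRE.one.mul (unionVecs B).star)
          ≡' (exprVec (u + s)).mul (unionVecs B).star :=
            CKA.mul_congr (CKA.refl _) (CKA.one_mul _)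
        _ ≡' ((exprVec v).mul (exprVec c)).mul (unionVecs B).star :=
            CKA.mul_congr (by rw [heq]; exact cka_exprVec_add v c) (CKA.refl _)
        _ ≡' (exprVec v).mul ((exprVec c).mul (unionVecs B).star) := cka_mul_assoc' _ _ _
        _ ≤' (exprVec v).mul ((unionVecs B).star.mul (unionVecs B).star) :=
            mul_le_mul_right _ (mul_le_mul_left (exprVec_closure_le hc) _)
        _ ≤' (exprVec v).mul (unionVecs B).star :=
            mul_le_mul_right _ (star_mul_star_le _)
    exact hchain
  have main := claimList (B := B) (F := linExpr v B) A.toList hks u CRE.one hyp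
  have hstep : leq (starProd A.toList)
      (((starProd A.toList).mul CRE.one).mul (unionVecs B).star) := by
    calc starProd A.toList
        ≡' (starProd A.toList).mul CRE.one := (cka_mul_one _).symm
      _ ≡' ((starProd A.toList).mul CRE.one).mul CRE.one := (cka_mul_one _).symm
      _ ≤' ((starProd A.toList).mul CRE.one).mul (unionVecs B).star :=
          mul_le_mul_right _ (one_le_star _)
  calc linExpr u A
      ≤' (exprVec u).mul (starProd A.toList) :=
        mul_le_mul_right _ (unionVecs_star_le_starProd A)
    _ ≤' (exprVec u).mul (((starProd A.toList).mul CRE.one).mul (unionVecs B).star) :=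
        mul_le_mul_right _ hstep
    _ ≤' linExpr v B := main

end CKAnote
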